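/- arXiv:2204.14188 — 2 statements merged into one kernel-verified Lean document; each statement's English description precedes it below -/
import Mathlib

section
/- Let f : ℝ → ℝ be continuous and 2π-periodic, and suppose the conjugate function f̃(x) = lim_{h→0⁺} f̃(x,h) exists for almost every x and extends to a continuous 2π-periodic function on ℝ. Assume (Theorem A) that the harmonic conjugate f̃(r,x) satisfies f̃(r,x) - f̃(x,1-r) → 0 uniformly in x as r → 1⁻, and that f̃(r,x) → f̃(x) uniformly as r → 1⁻. Then f̃(x,h) converges uniformly in x as h → 0⁺. -/
open Real MeasureTheory Filter Topology

noncomputable def conjTrunc (f : ℝ → ℝ) (x h : ℝ) : ℝ :=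
  -(1 / π) * ∫ t in h..π, (f (x + t) - f (x - t)) * (1 / 2 * Real.cot (t / 2))

theorem stmt1 (f : ℝ → ℝ) (hf : Continuous f) (hper : Function.Periodic f (2 * π))
    (ftilde : ℝ → ℝ) (hft_cont : Continuous ftilde)
    (hft_per : Function.Periodic ftilde (2 * π))
    (hft_ae : ∀ᵐ x : ℝ, Tendsto (fun h => conjTrunc f x h) (𝓝[>] (0 : ℝ)) (𝓝 (ftilde x)))
    (fr : ℝ → ℝ → ℝ)  -- harmonic conjugate (conjugate Poisson integral), fr r x
    (hThmA : TendstoUniformly (fun r x => fr r x - conjTrunc f x (1 - r)) 0 (𝓝[<] (1 : ℝ)))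
    (hAbel : TendstoUniformly (fun r x => fr r x) ftilde (𝓝[<] (1 : ℝ))) :
    ∃ g : ℝ → ℝ, TendstoUniformly (fun h x => conjTrunc f x h) g (𝓝[>] (0 : ℝ)) := by
  refine ⟨ftilde, ?_⟩
  have h1 : TendstoUniformly (fun r x => conjTrunc f x (1 - r)) ftilde (𝓝[<] (1 : ℝ)) := by
    have h0 := hAbel.sub hThmA
    simp only [sub_zero] at h0
    have heq : ((fun r x => fr r x) - fun r x => fr r x - conjTrunc f x (1 - r))
        = fun r x => conjTrunc f x (1 - r) := by
      funext r x; simp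
    rwa [heq] at h0
  have hmap : Tendsto (fun h : ℝ => 1 - h) (𝓝[>] (0 : ℝ)) (𝓝[<] (1 : ℝ)) := by
    apply tendsto_nhdsWithin_of_tendsto_nhds_of_eventually_within
    · have : Tendsto (fun h : ℝ => 1 - h) (𝓝 (0 : ℝ)) (𝓝 (1 : ℝ)) := by
        simpa using ((tendsto_const_nhds : Tendsto (fun _ : ℝ => (1:ℝ)) (𝓝 0) (𝓝 1)).sub tendsto_id)
      exact this.mono_left nhdsWithin_le_nhds
    · filter_upwards [self_mem_nhdsWithin] with h hh
      simp only [Set.mem_Ioi] at hh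
      simp only [Set.mem_Iio]
      linarith
  intro u hu
  have h2 := hmap.eventually (h1 u hu)
  simpa using h2
end

section
/- Let f : ℝ → ℝ be continuous and 2π-periodic with modulus of continuity ω satisfying the Dini condition ∫_0^π ω(t)/t dt < ∞. Then the truncated conjugate integrals f̃(x,h) converge uniformly in x as h → 0⁺; consequently (by Zamansky's theorem) the conjugate function f̃ is continuous. -/
open Real MeasureTheory Filter Topology

noncomputable def modulus (f : ℝ → ℝ) (δ : ℝ) : ℝ :=
  sSup {y : ℝ | ∃ s t : ℝ, |s - t| ≤ δ ∧ y = |f s - f t|}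

section Aux

open Set

/-- half-cotangent bounds on `(0, π]` -/
lemma halfCot_bounds {t : ℝ} (ht : t ∈ Set.Ioc (0:ℝ) π) :
    0 ≤ 1 / 2 * Real.cot (t / 2) ∧ 1 / 2 * Real.cot (t / 2) ≤ 1 / t := by
  obtain ⟨ht0, htπ⟩ := ht
  set x := t / 2 with hx
  have hx0 : 0 < x := by positivity
  have hx2 : x ≤ π / 2 := by simp only [hx]; linarith
  have hsin : 0 < Real.sin x :=
    Real.sin_pos_of_pos_of_lt_pi hx0 (lt_of_le_of_lt hx2 (half_lt_self Real.pi_pos))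
  have hcos : 0 ≤ Real.cos x := Real.cos_nonneg_of_mem_Icc ⟨by linarith [Real.pi_pos], hx2⟩
  have hcot : Real.cot x = Real.cos x / Real.sin x := Real.cot_eq_cos_div_sin x
  have hmul : x * Real.cos x ≤ Real.sin x := by
    rcases lt_or_eq_of_le hx2 with h | h
    · have hcos' : 0 < Real.cos x := Real.cos_pos_of_mem_Ioo ⟨by linarith [Real.pi_pos], h⟩
      have := Real.lt_tan hx0 h
      rw [Real.tan_eq_sin_div_cos, lt_div_iff₀ hcos'] at this
      linarith
    · rw [h, Real.cos_pi_div_two, Real.sin_pi_div_two]; simp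
  have hle : Real.cot x ≤ 1 / x := by
    rw [hcot, div_le_div_iff₀ hsin hx0]
    nlinarith
  constructor
  · rw [hcot]; positivity
  · have : 1 / 2 * Real.cot x ≤ 1 / 2 * (1 / x) := by
      have : (0:ℝ) ≤ 1/2 := by norm_num
      exact mul_le_mul_of_nonneg_left hle this
    calc 1 / 2 * Real.cot x ≤ 1 / 2 * (1 / x) := this
      _ = 1 / t := by rw [hx]; field_simp

lemma modulus_bddAbove {f : ℝ → ℝ} {M : ℝ} (hM : ∀ x, |f x| ≤ M) (δ : ℝ) :
    BddAbove {y : ℝ | ∃ s t : ℝ, |s - t| ≤ δ ∧ y = |f s - f t|} := by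
  refine ⟨2 * M, ?_⟩
  rintro y ⟨s, t, -, rfl⟩
  calc |f s - f t| ≤ |f s| + |f t| := abs_sub _ _
    _ ≤ M + M := add_le_add (hM s) (hM t)
    _ = 2 * M := by ring

lemma le_modulus {f : ℝ → ℝ} {M : ℝ} (hM : ∀ x, |f x| ≤ M) {s t δ : ℝ}
    (h : |s - t| ≤ δ) : |f s - f t| ≤ modulus f δ :=
  le_csSup (modulus_bddAbove hM δ) ⟨s, t, h, rfl⟩

end Aux

theorem stmt9 (f : ℝ → ℝ) (hf : Continuous f) (hper : Function.Periodic f (2 * π))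
    (hDini : IntegrableOn (fun t => modulus f t / t) (Set.Ioc (0 : ℝ) π) volume) :
    ∃ g : ℝ → ℝ, Continuous g ∧
      TendstoUniformly (fun h x => conjTrunc f x h) g (𝓝[>] (0 : ℝ)) := by
  -- boundedness of f
  obtain ⟨M, hM⟩ : ∃ M : ℝ, ∀ x, |f x| ≤ M := by
    obtain ⟨C, hC⟩ := (isCompact_Icc (a := (0:ℝ)) (b := 2 * π)).exists_bound_of_continuousOn
      hf.continuousOn
    refine ⟨C, fun x => ?_⟩
    obtain ⟨y, hy, hxy⟩ := hper.exists_mem_Ico₀ (by positivity) x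
    rw [hxy, ← Real.norm_eq_abs]
    exact hC y (Set.Ico_subset_Icc_self hy)
  set F : ℝ → ℝ → ℝ := fun x t => (f (x + t) - f (x - t)) * (1 / 2 * Real.cot (t / 2)) with hF
  set bound : ℝ → ℝ := fun t => 2 * (modulus f t / t) with hbound
  -- pointwise bound
  have hptwise : ∀ x : ℝ, ∀ t ∈ Set.Ioc (0:ℝ) π, ‖F x t‖ ≤ bound t := by
    intro x t ht
    obtain ⟨hc0, hc1⟩ := halfCot_bounds ht
    have hdiff : |f (x + t) - f (x - t)| ≤ 2 * modulus f t := by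
      have h1 : |f (x + t) - f x| ≤ modulus f t :=
        le_modulus hM (by rw [show x + t - x = t by ring, abs_of_pos ht.1])
      have h2 : |f x - f (x - t)| ≤ modulus f t :=
        le_modulus hM (by rw [show x - (x - t) = t by ring, abs_of_pos ht.1])
      calc |f (x + t) - f (x - t)| ≤ |f (x + t) - f x| + |f x - f (x - t)| := abs_sub_le _ _ _
        _ ≤ 2 * modulus f t := by linarith
    have hmod0 : 0 ≤ modulus f t := by
      have := le_modulus hM (f := f) (s := 0) (t := 0) (δ := t) (by simp [le_of_lt ht.1])
      simpa using this.trans_eq' (by simp)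
    rw [hF]
    rw [Real.norm_eq_abs, abs_mul, abs_of_nonneg hc0]
    calc |f (x + t) - f (x - t)| * (1 / 2 * Real.cot (t / 2))
        ≤ (2 * modulus f t) * (1 / t) := by
          apply mul_le_mul hdiff hc1 hc0 (by positivity)
      _ = bound t := by rw [hbound]; ring
  -- measurability of F x
  have hmeas : ∀ x : ℝ, Measurable (F x) := by
    intro x
    have hcot : (fun t : ℝ => 1 / 2 * Real.cot (t / 2))
        = fun t => 1 / 2 * (Real.cos (t / 2) / Real.sin (t / 2)) := by
      funext t; rw [Real.cot_eq_cos_div_sin]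
    apply Measurable.mul
    · exact ((hf.comp (continuous_const.add continuous_id)).sub
        (hf.comp (continuous_const.sub continuous_id))).measurable
    · rw [hcot]
      exact measurable_const.mul
        ((Real.measurable_cos.comp (measurable_id.div_const 2)).div
          (Real.measurable_sin.comp (measurable_id.div_const 2)))
  -- integrability of the bound
  have hbound_int : IntegrableOn bound (Set.Ioc (0:ℝ) π) volume := hDini.const_mul 2
  have hbound_ii : IntervalIntegrable bound volume 0 π := by
    rw [intervalIntegrable_iff, Set.uIoc_of_le Real.pi_pos.le]; exact hbound_int
  -- a.e. bound in restricted form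
  have hae : ∀ x : ℝ, ∀ᵐ t ∂(volume.restrict (Set.Ioc (0:ℝ) π)), ‖F x t‖ ≤ bound t := by
    intro x
    rw [ae_restrict_iff' measurableSet_Ioc]
    exact Filter.Eventually.of_forall (hptwise x)
  -- integrability of F x on Ioc 0 π
  have hFint : ∀ x : ℝ, IntegrableOn (F x) (Set.Ioc (0:ℝ) π) volume := fun x =>
    Integrable.mono' hbound_int (hmeas x).aestronglyMeasurable (hae x)
  have hFii : ∀ x : ℝ, IntervalIntegrable (F x) volume 0 π := by
    intro x
    rw [intervalIntegrable_iff, Set.uIoc_of_le Real.pi_pos.le]; exact hFint x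
  -- define g
  set g : ℝ → ℝ := fun x => -(1 / π) * ∫ t in (0:ℝ)..π, F x t with hg
  have hπpos : (0:ℝ) < π := Real.pi_pos
  refine ⟨g, ?_, ?_⟩
  · -- continuity of g
    apply Continuous.mul continuous_const
    apply intervalIntegral.continuous_of_dominated_interval
      (bound := bound) (fun x => (hmeas x).aestronglyMeasurable)
    · intro x
      apply Filter.Eventually.of_forall
      intro t ht
      rw [Set.uIoc_of_le hπpos.le] at ht
      exact hptwise x t ht
    · exact hbound_ii
    · apply Filter.Eventually.of_forall
      intro t _
      apply Continuous.mul _ continuous_const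
      exact (hf.comp (continuous_id.add continuous_const)).sub
        (hf.comp (continuous_id.sub continuous_const))
  · -- uniform convergence
    rw [Metric.tendstoUniformly_iff]
    intro ε hε
    -- the primitive of the bound tends to 0
    set Φ : ℝ → ℝ := fun h => ∫ t in Set.Ioc (0:ℝ) h, bound t with hΦ
    have hΦcont : ContinuousOn Φ (Set.Icc (0:ℝ) π) := by
      apply intervalIntegral.continuousOn_primitive
      rw [integrableOn_Icc_iff_integrableOn_Ioc]
      exact hbound_int
    have hΦ0 : Φ 0 = 0 := by simp [hΦ]
    have hmem : Set.Icc (0:ℝ) π ∈ 𝓝[>] (0:ℝ)  := by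
      rw [mem_nhdsWithin]
      exact ⟨Set.Iio π, isOpen_Iio, hπpos, fun x hx => ⟨hx.2.le, hx.1.le⟩⟩
    have hΦtendsto : Tendsto Φ (𝓝[>] (0:ℝ)) (𝓝 0) := by
      have h1 : Tendsto Φ (𝓝[Set.Icc (0:ℝ) π] 0) (𝓝 0) := by
        have := hΦcont 0 ⟨le_refl _, hπpos.le⟩
        rw [ContinuousWithinAt, hΦ0] at this
        exact this
      exact h1.mono_left (nhdsWithin_le_of_mem hmem)
    have hev1 : ∀ᶠ h in 𝓝[>] (0:ℝ), Φ h < ε * π :=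
      hΦtendsto.eventually_lt_const (by positivity)
    have hev2 : ∀ᶠ h in 𝓝[>] (0:ℝ), h ∈ Set.Ioo (0:ℝ) π := by
      rw [eventually_nhdsWithin_iff]
      filter_upwards [Iio_mem_nhds hπpos] with h h1 h2
      exact ⟨h2, h1⟩
    filter_upwards [hev1, hev2] with h hΦh ⟨hh0, hhπ⟩
    intro x
    -- split the integral
    have hsub1 : Set.uIcc (0:ℝ) h ⊆ Set.uIcc (0:ℝ) π := by
      rw [Set.uIcc_of_le hh0.le, Set.uIcc_of_le hπpos.le]
      exact Set.Icc_subset_Icc le_rfl hhπ.le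
    have hii1 : IntervalIntegrable (F x) volume 0 h := (hFii x).mono_set hsub1
    have hii2 : IntervalIntegrable (F x) volume h π := by
      apply (hFii x).mono_set
      rw [Set.uIcc_of_le hhπ.le, Set.uIcc_of_le hπpos.le]
      exact Set.Icc_subset_Icc hh0.le le_rfl
    have hsplit : (∫ t in (0:ℝ)..h, F x t) + ∫ t in h..π, F x t = ∫ t in (0:ℝ)..π, F x t :=
      intervalIntegral.integral_add_adjacent_intervals hii1 hii2
    have hdistval : g x - conjTrunc f x h = -(1 / π) * ∫ t in (0:ℝ)..h, F x t := by
      simp only [hg, conjTrunc]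
      rw [← hsplit]
      ring
    have hΦnonneg : 0 ≤ Φ h := by
      apply setIntegral_nonneg measurableSet_Ioc
      intro t ht
      exact (norm_nonneg (F x t)).trans (hptwise x t ⟨ht.1, ht.2.trans hhπ.le⟩)
    -- bound the small integral
    have hsmall : ‖∫ t in (0:ℝ)..h, F x t‖ ≤ Φ h := by
      have h1 : ‖∫ t in (0:ℝ)..h, F x t‖ ≤ |∫ t in (0:ℝ)..h, bound t| := by
        apply intervalIntegral.norm_integral_le_abs_of_norm_le _ (hbound_ii.mono_set hsub1)
        rw [Set.uIoc_of_le hh0.le, ae_restrict_iff' measurableSet_Ioc]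
        apply Filter.Eventually.of_forall
        intro t ht
        exact hptwise x t ⟨ht.1, ht.2.trans hhπ.le⟩
      have h2 : |∫ t in (0:ℝ)..h, bound t| = Φ h := by
        rw [intervalIntegral.integral_of_le hh0.le]
        exact abs_of_nonneg hΦnonneg
      rw [h2] at h1
      exact h1
    rw [dist_eq_norm, hdistval]
    rw [norm_mul, norm_neg, norm_div, norm_one, Real.norm_eq_abs π, abs_of_pos hπpos]
    calc 1 / π * ‖∫ t in (0:ℝ)..h, F x t‖ ≤ 1 / π * Φ h := by
          apply mul_le_mul_of_nonneg_left hsmall (by positivity)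
      _ < 1 / π * (ε * π) := by
          apply mul_lt_mul_of_pos_left hΦh (by positivity)
      _ = ε := by field_simp
end
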